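/- Assume: A and B are almost periodic; the family (t_n^{(k)}) is equipotentially almost periodic; 𝒥_n(t) is invertible for every n ∈ ℤ and t ∈ [t_n, t_{n+1}]; every H(n) = Z_n(t_{n+1}) is invertible; the difference equation φ(n+1) = H(n)φ(n) is exponentially stable, i.e. |Φ(n)Φ(k+1)^{-1}| ≤ Kρ^{n−k} for all n ≥ k with K ≥ 1 and 0 < ρ < 1; F : ℝ × (ℂ^q)^ℓ → ℂ^q is uniformly almost periodic and L-Lipschitz; p_1, …, p_ℓ ≥ 1 with p = max_j p_j; and, with L' := √q K₀ θ L where K₀ = exp(|A|_∞ θ), assume 2KL'ℓ/(1−ρ) < 1 so that the DEPCAG y'(t) = A(t)y(t) + B(t)y(γ⁰(t)) + F(t, y(γ^{p_1}(t)), …, y(γ^{p_ℓ}(t))) has an almost periodic solution y. Then there exists K̃ > 0 such that for every solution ỹ of the same DEPCAG on the half-line, defined on {t_{−p}, …, t_{−1}} ∪ [t_0, ∞) with prescribed values ỹ(t_{−j}) (j = 0, …, p), one has |y(t) − ỹ(t)| ≤ K̃ · (ρ(1 + KL'ℓρ^{−p}))ⁿ · max_{0 ≤ j ≤ p} |y(t_{−j})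 − ỹ(t_{−j})| for every t ∈ [t_n, t_{n+1}) with n ≥ 0. In particular, if KL'ℓ/(1−ρ) < ρ^{p−1}, then y is exponentially stable as t → +∞. -/

import Mathlib

open scoped Matrix
open MeasureTheory Filter

attribute [local instance] Matrix.frobeniusSeminormedAddCommGroup
  Matrix.frobeniusNormedAddCommGroup Matrix.frobeniusNormedSpace
  Matrix.frobeniusNormedRing Matrix.frobeniusNormedAlgebra Matrix.frobeniusIsBoundedSMul

noncomputable section
set_option maxHeartbeats 1000000

abbrev Mat (q : ℕ) := Matrix (Fin q) (Fin q) ℂ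
abbrev Vec (q : ℕ) := EuclideanSpace ℂ (Fin q)

/-- Action of a `q × q` complex matrix on `ℂ^q` with the Euclidean norm. -/
def aMul {q : ℕ} (M : Mat q) (v : Vec q) : Vec q := Matrix.toEuclideanLin M v

/-- A set of reals is relatively dense. -/
def RelDenseR (E : Set ℝ) : Prop :=
  ∃ l : ℝ, 0 < l ∧ ∀ m : ℝ, (E ∩ Set.Icc m (m + l)).Nonempty

/-- A set of integers is relatively dense in `ℤ`. -/
def RelDenseZ (E : Set ℤ) : Prop :=
  ∃ l : ℤ, 0 < l ∧ ∀ m : ℤ, (E ∩ Set.Icc m (m + l)).Nonempty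

/-- Almost periodic (continuous) function on `ℝ`. -/
def APR {E : Type*} [NormedAddCommGroup E] (g : ℝ → E) : Prop :=
  Continuous g ∧ ∀ ε : ℝ, 0 < ε →
    RelDenseR {τ : ℝ | ∀ t : ℝ, ‖g (t + τ) - g t‖ ≤ ε}

/-- Almost periodic sequence on `ℤ`. -/
def APZ {E : Type*} [NormedAddCommGroup E] (x : ℤ → E) : Prop :=
  ∀ ε : ℝ, 0 < ε → RelDenseZ {τ : ℤ | ∀ n : ℤ, ‖x (n + τ) - x n‖ ≤ ε}

/-- The family `t_n^{(k)} = t_{n+k} - t_n` is equipotentially almost periodic. -/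
def EquiAP (ts : ℤ → ℝ) : Prop :=
  ∀ ε : ℝ, 0 < ε → RelDenseZ {T : ℤ | ∀ k n : ℤ,
    |(ts (T + n + k) - ts (T + n)) - (ts (n + k) - ts n)| ≤ ε}

/-- `X(t,s) = X(t) X(s)⁻¹`. -/
def XX {q : ℕ} (X : ℝ → Mat q) (t s : ℝ) : Mat q := X t * (X s)⁻¹

/-- `𝒥_n(t) = I + ∫_{t_n}^t X(t_n,u) B(u) du`. -/
def Jmat {q : ℕ} (X B : ℝ → Mat q) (ts : ℤ → ℝ) (n : ℤ) (r : ℝ) : Mat q :=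
  1 + ∫ u in (ts n)..r, XX X (ts n) u * B u

/-- `Z_n(t) = X(t,t_n) 𝒥_n(t)`. -/
def Zmat {q : ℕ} (X B : ℝ → Mat q) (ts : ℤ → ℝ) (n : ℤ) (r : ℝ) : Mat q :=
  XX X r (ts n) * Jmat X B ts n r

/-- `F : ℝ × (ℂ^q)^ℓ → ℂ^q` is uniformly almost periodic on `W = (ℂ^q)^ℓ`. -/
def UnifAPR {q ℓ : ℕ} (F : ℝ → (Fin ℓ → Vec q) → Vec q) : Prop :=
  Continuous (fun p : ℝ × (Fin ℓ → Vec q) => F p.1 p.2) ∧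
    ∀ ε : ℝ, 0 < ε → RelDenseR {τ : ℝ | ∀ t : ℝ, ∀ w : Fin ℓ → Vec q,
      ‖F (t + τ) w - F t w‖ ≤ ε}

/-- `F` is `L`-Lipschitz in the function-value arguments. -/
def LipF {q ℓ : ℕ} (L : ℝ) (F : ℝ → (Fin ℓ → Vec q) → Vec q) : Prop :=
  ∀ t : ℝ, ∀ x y : Fin ℓ → Vec q, ‖F t x - F t y‖ ≤ L * ∑ j : Fin ℓ, ‖x j - y j‖

/-- `y` solves the DEPCAG `y' = A(t)y + B(t)y(γ⁰(t)) + F(t, y(γ^{p_1}(t)), …, y(γ^{p_ℓ}(t)))`: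
it is continuous and, on each `(t_n, t_{n+1})` (i.e. off the nodes), it is differentiable
and the equation holds with `γ^{p}(t) = t_{n-p}`. -/
def IsSolNL {q ℓ : ℕ} (ts : ℤ → ℝ) (A B : ℝ → Mat q) (p : Fin ℓ → ℕ)
    (F : ℝ → (Fin ℓ → Vec q) → Vec q) (y : ℝ → Vec q) : Prop :=
  Continuous y ∧ ∀ n : ℤ, ∀ r ∈ Set.Ioo (ts n) (ts (n + 1)),
    HasDerivAt y (aMul (A r) (y r) + aMul (B r) (y (ts n)) +
      F r (fun j => y (ts (n - (p j : ℤ))))) r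


/-- `ỹ` is a solution of the nonlinear DEPCAG on the half-line `[t_0, ∞)` (its values at
the nodes `t_{-1}, …, t_{-p}` act as prescribed initial data for the delayed arguments). -/
def HalfSolNL {q ℓ : ℕ} (ts : ℤ → ℝ) (A B : ℝ → Mat q) (p : Fin ℓ → ℕ)
    (F : ℝ → (Fin ℓ → Vec q) → Vec q) (y : ℝ → Vec q) : Prop :=
  ContinuousOn y (Set.Ici (ts 0)) ∧ ∀ n : ℤ, 0 ≤ n → ∀ r ∈ Set.Ioo (ts n) (ts (n + 1)),
    HasDerivAt y (aMul (A r) (y r) + aMul (B r) (y (ts n)) +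
      F r (fun j => y (ts (n - (p j : ℤ))))) r

/-! ### Auxiliary lemmas -/

section Aux

open Set intervalIntegral

def aux_aL1' {q : ℕ} (M : Mat q) : Vec q →L[ℝ] Vec q :=
  LinearMap.toContinuousLinearMap ((Matrix.toEuclideanLin M).restrictScalars ℝ)

/-- `aMul` as a continuous bilinear map. -/
def auxCLM {q : ℕ} : Mat q →L[ℝ] (Vec q →L[ℝ] Vec q) :=
  LinearMap.toContinuousLinearMap
    { toFun := aux_aL1'
      map_add' := by
        intro M N; ext v; simp [aux_aL1', Matrix.toEuclideanLin_apply, Matrix.add_mulVec]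
      map_smul' := by
        intro r M; ext v
        simp [aux_aL1', Matrix.toEuclideanLin_apply, Matrix.smul_mulVec] }

lemma auxCLM_apply {q : ℕ} (M : Mat q) (v : Vec q) : auxCLM M v = aMul M v := rfl

lemma aMul_mul {q : ℕ} (M N : Mat q) (v : Vec q) : aMul (M * N) v = aMul M (aMul N v) := by
  simp [aMul, Matrix.toEuclideanLin_apply, Matrix.mulVec_mulVec]

lemma aMul_one {q : ℕ} (v : Vec q) : aMul 1 v = v := by
  simp [aMul, Matrix.toEuclideanLin_apply]

lemma aMul_add_mat {q : ℕ} (M N : Mat q) (v : Vec q) : aMul (M + N) v = aMul M v + aMul N v := by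
  simp [aMul, Matrix.toEuclideanLin_apply, Matrix.add_mulVec]

lemma aMul_neg_mat {q : ℕ} (M : Mat q) (v : Vec q) : aMul (-M) v = -aMul M v := by
  simp [aMul, Matrix.toEuclideanLin_apply, Matrix.neg_mulVec]

lemma aMul_add_vec {q : ℕ} (M : Mat q) (v w : Vec q) : aMul M (v + w) = aMul M v + aMul M w :=
  map_add (Matrix.toEuclideanLin M) v w

lemma aMul_sub_vec {q : ℕ} (M : Mat q) (v w : Vec q) : aMul M (v - w) = aMul M v - aMul M w :=
  map_sub (Matrix.toEuclideanLin M) v w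

lemma norm_aMul_le {q : ℕ} (M : Mat q) (v : Vec q) : ‖aMul M v‖ ≤ ‖M‖ * ‖v‖ := by
  have h1 : aMul M v = (WithLp.equiv 2 _).symm (M *ᵥ (WithLp.equiv 2 _) v) :=
    Matrix.toEuclideanLin_apply M v
  have h2 : ‖aMul M v‖ = ‖Matrix.replicateCol Unit (M *ᵥ (WithLp.equiv 2 _) v)‖ := by
    rw [h1, Matrix.frobenius_norm_replicateCol]; rfl
  rw [h2, Matrix.replicateCol_mulVec]
  calc ‖M * Matrix.replicateCol Unit ((WithLp.equiv 2 _) v)‖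
      ≤ ‖M‖ * ‖Matrix.replicateCol Unit ((WithLp.equiv 2 _) v)‖ := Matrix.frobenius_norm_mul _ _
    _ = ‖M‖ * ‖v‖ := by rw [Matrix.frobenius_norm_replicateCol]; norm_num

lemma frob_norm_one {q : ℕ} : ‖(1 : Mat q)‖ = Real.sqrt q := by
  have h : ‖(1 : Mat q)‖₊ = NNReal.sqrt (Fintype.card (Fin q)) * ‖(1:ℂ)‖₊ :=
    Matrix.frobenius_nnnorm_one
  have h2 : ‖(1 : Mat q)‖ = (NNReal.sqrt (Fintype.card (Fin q)) : ℝ) * ‖(1:ℂ)‖ :=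
    congrArg NNReal.toReal h
  simpa [Real.coe_sqrt] using h2

lemma hasDerivAt_aMul {q : ℕ} {N : ℝ → Mat q} {w : ℝ → Vec q} {N' : Mat q} {w' : Vec q} {t : ℝ}
    (hN : HasDerivAt N N' t) (hw : HasDerivAt w w' t) :
    HasDerivAt (fun s => aMul (N s) (w s)) (aMul N' (w t) + aMul (N t) w') t :=
  (auxCLM.hasFDerivAt.comp_hasDerivAt t hN).clm_apply hw

lemma hasDerivAt_inv_mat {q : ℕ} {X A : ℝ → Mat q} (hX : ∀ t, HasDerivAt X (A t * X t) t)
    (hXinv : ∀ t, IsUnit (X t)) (t : ℝ) :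
    HasDerivAt (fun s => (X s)⁻¹) (-((X t)⁻¹ * A t)) t := by
  obtain ⟨u, hu⟩ := hXinv t
  have hinv : (X t)⁻¹ = (↑u⁻¹ : Mat q) := by
    rw [Matrix.nonsing_inv_eq_ringInverse, ← hu, Ring.inverse_unit]
  have h1 : HasFDerivAt (Ring.inverse : Mat q → Mat q)
      (-ContinuousLinearMap.mulLeftRight ℝ (Mat q) ↑u⁻¹ ↑u⁻¹) (X t) := by
    have := hasFDerivAt_ringInverse (𝕜 := ℝ) (R := Mat q) u
    rwa [hu] at this
  have h2 : HasDerivAt (fun s => Ring.inverse (X s))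
      ((-ContinuousLinearMap.mulLeftRight ℝ (Mat q) ↑u⁻¹ ↑u⁻¹) (A t * X t)) t :=
    h1.comp_hasDerivAt t (hX t)
  have hXX : X t * (X t)⁻¹ = 1 :=
    Matrix.mul_nonsing_inv _ ((Matrix.isUnit_iff_isUnit_det _).mp ⟨u, hu⟩)
  have hval : (-ContinuousLinearMap.mulLeftRight ℝ (Mat q) ↑u⁻¹ ↑u⁻¹) (A t * X t)
      = -((X t)⁻¹ * A t) := by
    simp only [ContinuousLinearMap.neg_apply, ContinuousLinearMap.mulLeftRight_apply]
    rw [← hinv]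
    rw [show (X t)⁻¹ * (A t * X t) * (X t)⁻¹ = (X t)⁻¹ * A t * (X t * (X t)⁻¹) by
      noncomm_ring]
    rw [hXX, mul_one]
  rw [hval] at h2
  have heq : (fun s => Ring.inverse (X s)) = fun s => (X s)⁻¹ := by
    funext s; rw [Matrix.nonsing_inv_eq_ringInverse]
  rwa [heq] at h2

lemma norm_XX_fwd {q : ℕ} {X A : ℝ → Mat q} (hX : ∀ t, HasDerivAt X (A t * X t) t)
    (hXinv : ∀ t, IsUnit (X t)) {a : ℝ} (hA : ∀ t, ‖A t‖ ≤ a)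
    {s u : ℝ} (hsu : s ≤ u) :
    ‖X u * (X s)⁻¹‖ ≤ Real.sqrt q * Real.exp (a * (u - s)) := by
  set f : ℝ → Mat q := fun t => X t * (X s)⁻¹ with hf
  have hder : ∀ t, HasDerivAt f (A t * f t) t := by
    intro t
    have := (hX t).mul_const ((X s)⁻¹)
    rw [mul_assoc] at this; exact this
  have hcont : ContinuousOn f (Icc s u) := fun t _ => ((hder t).continuousAt).continuousWithinAt
  have hfs : ‖f s‖ ≤ Real.sqrt q := by
    have : f s = 1 := Matrix.mul_nonsing_inv _ ((Matrix.isUnit_iff_isUnit_det _).mp (hXinv s))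
    rw [this, frob_norm_one]
  have key := norm_le_gronwallBound_of_norm_deriv_right_le (f := f) (f' := fun t => A t * f t)
      (a := s) (b := u) hcont (fun t _ => (hder t).hasDerivWithinAt) hfs
      (fun t _ => by
        calc ‖A t * f t‖ ≤ ‖A t‖ * ‖f t‖ := norm_mul_le _ _
          _ ≤ a * ‖f t‖ + 0 := by
              rw [add_zero]
              exact mul_le_mul_of_nonneg_right (hA t) (norm_nonneg _))
  have := key u ⟨hsu, le_rfl⟩
  rwa [gronwallBound_ε0] at this

lemma norm_XX_bwd {q : ℕ} {X A : ℝ → Mat q} (hX : ∀ t, HasDerivAt X (A t * X t) t)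
    (hXinv : ∀ t, IsUnit (X t)) {a : ℝ} (hA : ∀ t, ‖A t‖ ≤ a)
    {s u : ℝ} (hsu : s ≤ u) :
    ‖X s * (X u)⁻¹‖ ≤ Real.sqrt q * Real.exp (a * (u - s)) := by
  set f : ℝ → Mat q := fun t => X s * (X t)⁻¹ with hf
  have hder : ∀ t, HasDerivAt f (-(f t * A t)) t := by
    intro t
    have := (hasDerivAt_inv_mat hX hXinv t).const_mul (X s)
    have h2 : X s * -((X t)⁻¹ * A t) = -(f t * A t) := by
      rw [mul_neg, hf]; ring_nf; rw [mul_assoc]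
    rwa [h2] at this
  have hcont : ContinuousOn f (Icc s u) := fun t _ => ((hder t).continuousAt).continuousWithinAt
  have hfs : ‖f s‖ ≤ Real.sqrt q := by
    have : f s = 1 := Matrix.mul_nonsing_inv _ ((Matrix.isUnit_iff_isUnit_det _).mp (hXinv s))
    rw [this, frob_norm_one]
  have key := norm_le_gronwallBound_of_norm_deriv_right_le (f := f) (f' := fun t => -(f t * A t))
      (a := s) (b := u) hcont (fun t _ => (hder t).hasDerivWithinAt) hfs
      (fun t _ => by
        calc ‖-(f t * A t)‖ = ‖f t * A t‖ := norm_neg _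
          _ ≤ ‖f t‖ * ‖A t‖ := norm_mul_le _ _
          _ ≤ a * ‖f t‖ + 0 := by
              rw [add_zero, mul_comm]
              exact mul_le_mul_of_nonneg_right (hA t) (norm_nonneg _))
  have := key u ⟨hsu, le_rfl⟩
  rwa [gronwallBound_ε0] at this

lemma varConst {q : ℕ} {X A : ℝ → Mat q} (hX : ∀ t, HasDerivAt X (A t * X t) t)
    (hXinv : ∀ t, IsUnit (X t)) {g : ℝ → Vec q} (hg : Continuous g)
    {z : ℝ → Vec q} {c d : ℝ} (hcd : c ≤ d) (hzc : ContinuousOn z (Icc c d))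
    (hz : ∀ r ∈ Ioo c d, HasDerivAt z (aMul (A r) (z r) + g r) r) :
    z d = aMul (X d * (X c)⁻¹) (z c) + ∫ s in c..d, aMul (X d * (X s)⁻¹) (g s) := by
  set iX : ℝ → Mat q := fun s => (X s)⁻¹ with hiX
  have hiXc : Continuous iX :=
    continuous_iff_continuousAt.mpr fun t => (hasDerivAt_inv_mat hX hXinv t).continuousAt
  set w : ℝ → Vec q := fun s => aMul (iX s) (z s) with hw
  have hXiX : ∀ s, X s * iX s = 1 := fun s =>
    Matrix.mul_nonsing_inv _ ((Matrix.isUnit_iff_isUnit_det _).mp (hXinv s))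
  have hw' : ∀ r ∈ Ioo c d, HasDerivAt w (aMul (iX r) (g r)) r := by
    intro r hr
    have h1 := hasDerivAt_aMul (hasDerivAt_inv_mat hX hXinv r) (hz r hr)
    have h2 : aMul (-(iX r * A r)) (z r) + aMul (iX r) (aMul (A r) (z r) + g r)
        = aMul (iX r) (g r) := by
      rw [aMul_neg_mat, aMul_mul, aMul_add_vec]; abel
    rwa [h2] at h1
  have hwc : ContinuousOn w (Icc c d) := by
    have h1 : ContinuousOn (fun s => auxCLM (iX s)) (Icc c d) :=
      (auxCLM.continuous.comp hiXc).continuousOn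
    exact h1.clm_apply hzc
  have hint : IntervalIntegrable (fun s => aMul (iX s) (g s)) volume c d := by
    have : Continuous fun s => aMul (iX s) (g s) :=
      ((auxCLM.continuous.comp hiXc).clm_apply hg)
    exact this.intervalIntegrable _ _
  have hftc : (∫ s in c..d, aMul (iX s) (g s)) = w d - w c :=
    intervalIntegral.integral_eq_sub_of_hasDeriv_right_of_le hcd hwc
      (fun r hr => (hw' r hr).hasDerivWithinAt) hint
  have hzd : z d = aMul (X d) (w d) := by
    rw [hw]; dsimp only; rw [← aMul_mul, hXiX, aMul_one]
  have hwd : w d = w c + ∫ s in c..d, aMul (iX s) (g s) := by rw [hftc]; abel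
  rw [hzd, hwd, aMul_add_vec]
  congr 1
  · rw [hw]; dsimp only; rw [← aMul_mul]
  · have h3 : aMul (X d) (∫ s in c..d, aMul (iX s) (g s))
        = aux_aL1' (X d) (∫ s in c..d, aMul (iX s) (g s)) := rfl
    rw [h3, ← (aux_aL1' (X d)).intervalIntegral_comp_comm hint]
    refine intervalIntegral.integral_congr fun s _ => ?_
    show aMul (X d) (aMul (iX s) (g s)) = _
    rw [← aMul_mul]

lemma zStep {q : ℕ} {X A B : ℝ → Mat q} {ts : ℤ → ℝ}
    (hX : ∀ t, HasDerivAt X (A t * X t) t) (hXinv : ∀ t, IsUnit (X t))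
    (hB : Continuous B) {h : ℝ → Vec q} (hh : Continuous h)
    {z : ℝ → Vec q} {n : ℤ} {d : ℝ} (hcd : ts n ≤ d) (hzc : ContinuousOn z (Icc (ts n) d))
    (hz : ∀ r ∈ Ioo (ts n) d,
      HasDerivAt z (aMul (A r) (z r) + (aMul (B r) (z (ts n)) + h r)) r) :
    z d = aMul (Zmat X B ts n d) (z (ts n)) + ∫ s in (ts n)..d, aMul (X d * (X s)⁻¹) (h s) := by
  set c := ts n
  have hiXc : Continuous fun s : ℝ => (X s)⁻¹ :=
    continuous_iff_continuousAt.mpr fun t => (hasDerivAt_inv_mat hX hXinv t).continuousAt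
  have hg : Continuous fun r => aMul (B r) (z c) + h r := by
    have : Continuous fun r => auxCLM (B r) := auxCLM.continuous.comp hB
    exact (this.clm_apply continuous_const).add hh
  have key := varConst hX hXinv hg hcd hzc hz
  have hint1 : IntervalIntegrable (fun s => aMul (X d * (X s)⁻¹) (aMul (B s) (z c))) volume c d := by
    have : Continuous fun s => aMul (X d * (X s)⁻¹) (aMul (B s) (z c)) := by
      have h1 : Continuous fun s : ℝ => X d * (X s)⁻¹ := continuous_const.mul hiXc
      have h2 : Continuous fun s => auxCLM (X d * (X s)⁻¹) := auxCLM.continuous.comp h1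
      have h3 : Continuous fun s => auxCLM (B s) := auxCLM.continuous.comp hB
      exact h2.clm_apply (h3.clm_apply continuous_const)
    exact this.intervalIntegrable _ _
  have hint2 : IntervalIntegrable (fun s => aMul (X d * (X s)⁻¹) (h s)) volume c d := by
    have : Continuous fun s => aMul (X d * (X s)⁻¹) (h s) := by
      have h1 : Continuous fun s : ℝ => X d * (X s)⁻¹ := continuous_const.mul hiXc
      exact (auxCLM.continuous.comp h1).clm_apply hh
    exact this.intervalIntegrable _ _
  have hsplit : (∫ s in c..d, aMul (X d * (X s)⁻¹) (aMul (B s) (z c) + h s))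
      = (∫ s in c..d, aMul (X d * (X s)⁻¹) (aMul (B s) (z c)))
        + ∫ s in c..d, aMul (X d * (X s)⁻¹) (h s) := by
    rw [← intervalIntegral.integral_add hint1 hint2]
    exact intervalIntegral.integral_congr fun s _ => by rw [aMul_add_vec]
  rw [hsplit] at key
  have hMcont : Continuous fun s : ℝ => X d * (X s)⁻¹ * B s :=
    (continuous_const.mul hiXc).mul hB
  have hMint : @IntervalIntegrable (Mat q) PseudoMetricSpace.toUniformSpace.toTopologicalSpace _ (fun s : ℝ => X d * (X s)⁻¹ * B s) volume c d :=
    hMcont.intervalIntegrable _ _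
  have hfirst : (∫ s in c..d, aMul (X d * (X s)⁻¹) (aMul (B s) (z c)))
      = aMul (∫ s in c..d, X d * (X s)⁻¹ * B s) (z c) := by
    have hcc := (auxCLM.flip (z c)).intervalIntegral_comp_comm hMint
    calc (∫ s in c..d, aMul (X d * (X s)⁻¹) (aMul (B s) (z c)))
        = ∫ s in c..d, (auxCLM.flip (z c)) (X d * (X s)⁻¹ * B s) :=
          intervalIntegral.integral_congr fun s _ => by
            exact (aMul_mul (X d * (X s)⁻¹) (B s) (z c)).symm
      _ = (auxCLM.flip (z c)) (∫ s in c..d, X d * (X s)⁻¹ * B s) := hcc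
      _ = aMul (∫ s in c..d, X d * (X s)⁻¹ * B s) (z c) := rfl
  rw [hfirst] at key
  have hZ : Zmat X B ts n d = X d * (X c)⁻¹ + ∫ s in c..d, X d * (X s)⁻¹ * B s := by
    have hinv : (X c)⁻¹ * X c = 1 :=
      Matrix.nonsing_inv_mul _ ((Matrix.isUnit_iff_isUnit_det _).mp (hXinv c))
    have hJcont : Continuous fun u : ℝ => XX X c u * B u :=
      (continuous_const.mul hiXc).mul hB
    have hJint : @IntervalIntegrable (Mat q) PseudoMetricSpace.toUniformSpace.toTopologicalSpace _ (fun u : ℝ => XX X c u * B u) volume c d :=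
      hJcont.intervalIntegrable _ _
    have hpull : X d * (X c)⁻¹ * (∫ u in c..d, XX X c u * B u)
        = ∫ u in c..d, X d * (X u)⁻¹ * B u := by
      have hcc := (ContinuousLinearMap.mul ℝ (Mat q) (X d * (X c)⁻¹)).intervalIntegral_comp_comm hJint
      calc X d * (X c)⁻¹ * (∫ u in c..d, XX X c u * B u)
          = (ContinuousLinearMap.mul ℝ (Mat q) (X d * (X c)⁻¹)) (∫ u in c..d, XX X c u * B u) := rfl
        _ = ∫ u in c..d, (ContinuousLinearMap.mul ℝ (Mat q) (X d * (X c)⁻¹)) (XX X c u * B u) :=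
            hcc.symm
        _ = ∫ u in c..d, X d * (X u)⁻¹ * B u := by
            refine intervalIntegral.integral_congr fun u _ => ?_
            show X d * (X c)⁻¹ * (XX X c u * B u) = X d * (X u)⁻¹ * B u
            rw [XX, show X d * (X c)⁻¹ * (X c * (X u)⁻¹ * B u)
              = X d * ((X c)⁻¹ * X c) * ((X u)⁻¹ * B u) by noncomm_ring, hinv, mul_one, mul_assoc]
    rw [Zmat, Jmat, XX, mul_add, mul_one, hpull]
  rw [hZ, aMul_add_mat, key]
  abel

lemma discreteRep {q : ℕ} (Φ : ℕ → Mat q) (H : ℕ → Mat q)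
    (hΦ : ∀ n : ℕ, Φ (n + 1) = H n * Φ n) (hu : ∀ n, IsUnit (Φ n))
    (ζ : ℕ → Vec q) (r : ℕ → Vec q)
    (hrec : ∀ n : ℕ, ζ (n + 1) = aMul (H n) (ζ n) + r n) :
    ∀ n : ℕ, ζ n = aMul (Φ n * (Φ 0)⁻¹) (ζ 0)
      + ∑ k ∈ Finset.range n, aMul (Φ n * (Φ (k + 1))⁻¹) (r k) := by
  have hΦΦ : ∀ n, Φ n * (Φ n)⁻¹ = 1 := fun n =>
    Matrix.mul_nonsing_inv _ ((Matrix.isUnit_iff_isUnit_det _).mp (hu n))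
  intro n
  induction n with
  | zero => simp [hΦΦ 0, aMul_one]
  | succ n ih =>
    rw [hrec n, ih]
    have hmap : aMul (H n) (aMul (Φ n * (Φ 0)⁻¹) (ζ 0)
        + ∑ k ∈ Finset.range n, aMul (Φ n * (Φ (k + 1))⁻¹) (r k))
        = aMul (Φ (n+1) * (Φ 0)⁻¹) (ζ 0)
          + ∑ k ∈ Finset.range n, aMul (Φ (n+1) * (Φ (k + 1))⁻¹) (r k) := by
      have h1 : ∀ v : Vec q, ∀ M : Mat q, aMul (H n) (aMul M v) = aMul (H n * M) v :=
        fun v M => (aMul_mul _ _ _).symm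
      calc aMul (H n) _ = aux_aL1' (H n) _ := rfl
        _ = aux_aL1' (H n) (aMul (Φ n * (Φ 0)⁻¹) (ζ 0))
            + ∑ k ∈ Finset.range n, aux_aL1' (H n) (aMul (Φ n * (Φ (k + 1))⁻¹) (r k)) := by
              rw [map_add, map_sum]
        _ = aMul (Φ (n+1) * (Φ 0)⁻¹) (ζ 0)
            + ∑ k ∈ Finset.range n, aMul (Φ (n+1) * (Φ (k + 1))⁻¹) (r k) := by
            congr 1
            · show aMul (H n) (aMul (Φ n * (Φ 0)⁻¹) (ζ 0)) = _
              rw [h1, ← mul_assoc, ← hΦ n]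
            · refine Finset.sum_congr rfl fun k _ => ?_
              show aMul (H n) (aMul (Φ n * (Φ (k+1))⁻¹) (r k)) = _
              rw [h1, ← mul_assoc, ← hΦ n]
    rw [hmap, Finset.sum_range_succ]
    have hlast : r n = aMul (Φ (n+1) * (Φ (n+1))⁻¹) (r n) := by rw [hΦΦ, aMul_one]
    rw [← hlast]
    abel

lemma APR.bounded {E : Type*} [NormedAddCommGroup E] {g : ℝ → E} (h : APR g) :
    ∃ C : ℝ, 0 ≤ C ∧ ∀ t, ‖g t‖ ≤ C := by
  obtain ⟨l, hl, hd⟩ := h.2 1 one_pos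
  obtain ⟨C₀, hC₀⟩ := (isCompact_Icc (a := (0:ℝ)) (b := l)).exists_bound_of_continuousOn
    (h.1.norm.continuousOn)
  refine ⟨C₀ + 1, ?_, ?_⟩
  · have h4 := hC₀ 0 ⟨le_rfl, hl.le⟩
    rw [Real.norm_eq_abs, abs_of_nonneg (norm_nonneg _)] at h4
    have h0 : (0:ℝ) ≤ ‖g 0‖ := norm_nonneg _
    linarith
  · intro t
    obtain ⟨τ, hτmem, hτIcc⟩ := hd (-t)
    have h1 : t + τ ∈ Icc (0:ℝ) l := ⟨by linarith [hτIcc.1], by linarith [hτIcc.2]⟩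
    have h2 : ‖g (t + τ) - g t‖ ≤ 1 := hτmem t
    have h3 : ‖g (t + τ)‖ ≤ C₀ := by
      have := hC₀ _ h1
      rwa [Real.norm_eq_abs, abs_of_nonneg (norm_nonneg _)] at this
    calc ‖g t‖ = ‖g (t + τ) - (g (t + τ) - g t)‖ := by rw [sub_sub_cancel]
      _ ≤ ‖g (t + τ)‖ + ‖g (t + τ) - g t‖ := norm_sub_le _ _
      _ ≤ C₀ + 1 := add_le_add h3 h2

lemma geom_id {β ρ d : ℝ} (h : β = ρ + d) (n : ℕ) :
    β ^ n = ρ ^ n + d * ∑ k ∈ Finset.range n, ρ ^ (n - 1 - k) * β ^ k := by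
  induction n with
  | zero => simp
  | succ n ih =>
    have hsum : ∑ k ∈ Finset.range (n+1), ρ ^ (n + 1 - 1 - k) * β ^ k
        = ρ * ∑ k ∈ Finset.range n, ρ ^ (n - 1 - k) * β ^ k + β ^ n := by
      rw [Finset.sum_range_succ]
      simp only [Nat.add_sub_cancel, Nat.sub_self, pow_zero, one_mul]
      rw [Finset.mul_sum]
      congr 1
      refine Finset.sum_congr rfl fun k hk => ?_
      have hk' : k < n := Finset.mem_range.mp hk
      have h5 : n - k = (n - 1 - k) + 1 := by omega
      rw [h5, pow_succ]; ring
    rw [hsum]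
    have h6 : β ^ (n+1) = ρ * β ^ n + d * β ^ n := by rw [pow_succ, h]; ring
    rw [h6, ih]; ring

end Aux

/-- exponential stability of the almost periodic solution of the nonlinear
DEPCAG when the difference equation `φ(n+1) = H(n)φ(n)` is exponentially stable
(`‖Φ(n)Φ(k+1)⁻¹‖ ≤ Kρ^{n−k}` for `n ≥ k`): every half-line solution `ỹ` satisfies
`‖y(t) − ỹ(t)‖ ≤ K̃ (ρ(1+KL'ℓρ^{−p}))ⁿ max_{0≤j≤p}‖y(t_{−j}) − ỹ(t_{−j})‖` on
`[t_n, t_{n+1})`, and if moreover `KL'ℓ/(1−ρ) < ρ^{p−1}` then `y` is exponentially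
stable as `t → +∞`. -/
theorem nonlinear_depcag_exponential_stability {q ℓ : ℕ} (hq : 1 ≤ q) (hℓ : 1 ≤ ℓ)
    (ts : ℤ → ℝ) (hts : StrictMono ts)
    (htop : Tendsto ts atTop atTop) (hbot : Tendsto ts atBot atBot)
    (θ : ℝ) (hθ : IsLUB (Set.range fun n : ℤ => ts (n + 1) - ts n) θ)
    (A B : ℝ → Mat q) (hA : APR A) (hB : APR B) (hEqui : EquiAP ts)
    (X : ℝ → Mat q) (hX : ∀ t : ℝ, HasDerivAt X (A t * X t) t)
    (hXinv : ∀ t : ℝ, IsUnit (X t))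
    (hJ : ∀ n : ℤ, ∀ r ∈ Set.Icc (ts n) (ts (n + 1)), IsUnit (Jmat X B ts n r))
    (hHinv : ∀ n : ℤ, IsUnit (Zmat X B ts n (ts (n + 1))))
    (Φ : ℤ → Mat q) (hΦinv : ∀ n : ℤ, IsUnit (Φ n))
    (hΦ : ∀ n : ℤ, Φ (n + 1) = Zmat X B ts n (ts (n + 1)) * Φ n)
    (K ρ : ℝ) (hK : 1 ≤ K) (hρ0 : 0 < ρ) (hρ1 : ρ < 1)
    (hstab : ∀ n k : ℤ, k ≤ n → ‖Φ n * (Φ (k + 1))⁻¹‖ ≤ K * ρ ^ (n - k))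
    (p : Fin ℓ → ℕ) (hp : ∀ j : Fin ℓ, 1 ≤ p j)
    (pm : ℕ) (hpm : IsGreatest (Set.range p) pm)
    (L : ℝ) (hL : 0 < L)
    (F : ℝ → (Fin ℓ → Vec q) → Vec q) (hFap : UnifAPR F) (hFlip : LipF L F)
    (L' : ℝ) (hL' : L' = Real.sqrt q * Real.exp ((⨆ t : ℝ, ‖A t‖) * θ) * θ * L)
    (hsmall : 2 * K * L' * ℓ / (1 - ρ) < 1)
    (y : ℝ → Vec q) (hysol : IsSolNL ts A B p F y) (hyap : APR y) :
    (∃ Kt : ℝ, 0 < Kt ∧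
      ∀ yt : ℝ → Vec q, HalfSolNL ts A B p F yt →
        ∀ n : ℕ, ∀ r ∈ Set.Ico (ts n) (ts (n + 1)),
          ‖y r - yt r‖ ≤ Kt * (ρ * (1 + K * L' * ℓ * (ρ ^ pm)⁻¹)) ^ n *
            ((Finset.range (pm + 1)).sup' (by simp)
              fun j => ‖y (ts (-(j : ℤ))) - yt (ts (-(j : ℤ)))‖)) ∧
    (K * L' * ℓ / (1 - ρ) < ρ ^ (pm - 1) →
      ∃ α ∈ Set.Ioo (0 : ℝ) 1, ∀ ε : ℝ, 0 < ε → ∃ δ : ℝ, 0 < δ ∧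
        ∀ yt : ℝ → Vec q, HalfSolNL ts A B p F yt →
          ((Finset.range (pm + 1)).sup' (by simp)
            fun j => ‖y (ts (-(j : ℤ))) - yt (ts (-(j : ℤ)))‖) ≤ δ →
          ∀ r : ℝ, ts 0 ≤ r → ‖yt r - y r‖ ≤ ε * Real.rpow α r) := by
  classical
  have hmono := hts.monotone
  have hgap : ∀ n : ℤ, ts (n + 1) - ts n ≤ θ := fun n => hθ.1 ⟨n, rfl⟩
  have hθpos : 0 < θ := by
    have h01 := hts (show (0:ℤ) < 1 by norm_num)
    have h02 := hgap 0
    norm_num at h02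
    linarith
  have hsqpos : 0 < Real.sqrt q := Real.sqrt_pos.mpr (by exact_mod_cast hq)
  obtain ⟨Ca, hCa0, hCa⟩ := hA.bounded
  set a := ⨆ t : ℝ, ‖A t‖ with ha_def
  have hbdd : BddAbove (Set.range fun t : ℝ => ‖A t‖) := ⟨Ca, by rintro x ⟨t, rfl⟩; exact hCa t⟩
  have haA : ∀ t, ‖A t‖ ≤ a := fun t => le_ciSup hbdd t
  have ha0 : 0 ≤ a := le_trans (norm_nonneg _) (haA 0)
  obtain ⟨b, hb0, hbB⟩ := hB.bounded
  have hK0 : 0 < K := lt_of_lt_of_le one_pos hK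
  have hL'pos : 0 < L' := by
    rw [hL']
    exact mul_pos (mul_pos (mul_pos hsqpos (Real.exp_pos _)) hθpos) hL
  have hpm1 : 1 ≤ pm := by obtain ⟨j, hj⟩ := hpm.1; exact hj ▸ hp j
  have hpmub : ∀ j, p j ≤ pm := fun j => hpm.2 ⟨j, rfl⟩
  have hρpm : 0 < ρ ^ pm := pow_pos hρ0 pm
  have hℓpos : 0 < (ℓ:ℝ) := by exact_mod_cast hℓ
  set β := ρ * (1 + K * L' * ℓ * (ρ ^ pm)⁻¹) with hβdef
  set d' := K * L' * (ℓ:ℝ) * ρ * (ρ ^ pm)⁻¹ with hd'def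
  have hβeq : β = ρ + d' := by rw [hβdef, hd'def]; ring
  have hd'pos : 0 < d' := by
    rw [hd'def]
    exact mul_pos (mul_pos (mul_pos (mul_pos hK0 hL'pos) hℓpos) hρ0) (inv_pos.mpr hρpm)
  have hρβ : ρ ≤ β := by rw [hβeq]; linarith
  have hβpos : 0 < β := lt_of_lt_of_le hρ0 hρβ
  have hauxβ : ∀ e : ℕ, e ≤ pm → ρ ^ pm ≤ β ^ e := by
    intro e he
    by_cases hb1 : β ≤ 1
    · calc ρ ^ pm ≤ β ^ pm := pow_le_pow_left₀ hρ0.le hρβ pm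
        _ ≤ β ^ e := pow_le_pow_of_le_one hβpos.le hb1 he
    · push_neg at hb1
      calc ρ ^ pm ≤ 1 := pow_le_one₀ hρ0.le hρ1.le
        _ ≤ β ^ e := one_le_pow₀ hb1.le
  set K₀ := Real.sqrt q * Real.exp (a * θ) with hK₀def
  have hK₀pos : 0 < K₀ := mul_pos hsqpos (Real.exp_pos _)
  set C₁ := K₀ * (Real.sqrt q + K₀ * b * θ) with hC₁def
  have hC₁pos : 0 < C₁ := by
    refine mul_pos hK₀pos (lt_of_lt_of_le hsqpos ?_)
    nlinarith [mul_nonneg (mul_nonneg hK₀pos.le hb0) hθpos.le]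
  set Kt := K * (C₁ + L' * ℓ * (ρ ^ pm)⁻¹) with hKtdef
  have hKtpos : 0 < Kt := by
    refine mul_pos hK0 (lt_of_lt_of_le hC₁pos ?_)
    nlinarith [mul_nonneg (mul_nonneg hL'pos.le hℓpos.le) (inv_pos.mpr hρpm).le]
  -- specialized X bounds
  have hXXf : ∀ {s u : ℝ}, s ≤ u → u - s ≤ θ → ‖X u * (X s)⁻¹‖ ≤ K₀ := by
    intro s u h1 h2
    refine (norm_XX_fwd hX hXinv haA h1).trans ?_
    rw [hK₀def]
    exact mul_le_mul_of_nonneg_left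
      (Real.exp_le_exp.mpr (mul_le_mul_of_nonneg_left h2 ha0)) hsqpos.le
  have hXXb : ∀ {s u : ℝ}, s ≤ u → u - s ≤ θ → ‖X s * (X u)⁻¹‖ ≤ K₀ := by
    intro s u h1 h2
    refine (norm_XX_bwd hX hXinv haA h1).trans ?_
    rw [hK₀def]
    exact mul_le_mul_of_nonneg_left
      (Real.exp_le_exp.mpr (mul_le_mul_of_nonneg_left h2 ha0)) hsqpos.le
  have hlinear : ∀ m : ℕ, ts (m:ℤ) ≤ ts 0 + m * θ := by
    intro m
    induction m with
    | zero => simp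
    | succ m ih =>
      have h1 : ((m+1:ℕ):ℤ) = (m:ℤ) + 1 := by push_cast; ring
      rw [h1]
      have h2 := hgap (m:ℤ)
      push_cast
      linarith
  -- stability estimates converted to ℕ
  have hstab0 : ∀ n : ℕ, ‖Φ (n:ℤ) * (Φ 0)⁻¹‖ ≤ K * ρ ^ n := by
    intro n
    have h := hstab (n:ℤ) (-1) (by omega)
    rw [show ((-1:ℤ) + 1) = 0 by ring,
      show ((n:ℤ) - (-1)) = ((n+1:ℕ):ℤ) by push_cast; ring, zpow_natCast] at h
    refine h.trans ?_
    have h2 : ρ ^ (n+1) ≤ ρ ^ n := pow_le_pow_of_le_one hρ0.le hρ1.le (by omega)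
    exact mul_le_mul_of_nonneg_left h2 hK0.le
  have hstabk : ∀ n k : ℕ, k < n → ‖Φ (n:ℤ) * (Φ ((k+1:ℕ):ℤ))⁻¹‖ ≤ K * ρ ^ (n - k) := by
    intro n k hk
    have h := hstab (n:ℤ) (k:ℤ) (by exact_mod_cast hk.le)
    rw [show ((k:ℤ) + 1) = ((k+1:ℕ):ℤ) by push_cast; ring,
      show ((n:ℤ) - (k:ℤ)) = ((n - k:ℕ):ℤ) by omega, zpow_natCast] at h
    exact h
  -- THE MAIN BOUND
  have KEY : ∀ yt : ℝ → Vec q, HalfSolNL ts A B p F yt →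
      ∀ n : ℕ, ∀ r ∈ Set.Ico (ts (n:ℤ)) (ts ((n:ℤ)+1)),
      ‖y r - yt r‖ ≤ Kt * β ^ n *
        ((Finset.range (pm + 1)).sup' (by simp)
          fun j => ‖y (ts (-(j : ℤ))) - yt (ts (-(j : ℤ)))‖) := by
    intro yt hyt
    set z : ℝ → Vec q := fun t => y t - yt t with hzdef
    set U : ℤ → ℝ := fun m => ‖z (ts m)‖ with hUdef
    have hU0 : ∀ m, 0 ≤ U m := fun m => norm_nonneg _
    set M := (Finset.range (pm + 1)).sup' (by simp)
      (fun j : ℕ => ‖y (ts (-(j : ℤ))) - yt (ts (-(j : ℤ)))‖) with hMdef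
    have hM0 : 0 ≤ M := by
      have h00 := Finset.le_sup' (fun j : ℕ => ‖y (ts (-(j : ℤ))) - yt (ts (-(j : ℤ)))‖)
        (Finset.mem_range.mpr (Nat.succ_pos pm))
      exact le_trans (norm_nonneg _) h00
    have hUneg : ∀ m : ℤ, -pm ≤ m → m ≤ 0 → U m ≤ M := by
      intro m h1 h2
      have h4 : (-m).toNat ∈ Finset.range (pm + 1) := Finset.mem_range.mpr (by omega)
      have h5 := Finset.le_sup' (fun j : ℕ => ‖y (ts (-(j : ℤ))) - yt (ts (-(j : ℤ)))‖) h4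
      have h6 : -(((-m).toNat : ℕ) : ℤ) = m := by omega
      rw [h6] at h5
      exact h5
    set Fd : ℤ → ℝ → Vec q := fun k s =>
      F s (fun j => y (ts (k - p j))) - F s (fun j => yt (ts (k - p j))) with hFddef
    have hFcw : ∀ w : Fin ℓ → Vec q, Continuous fun s => F s w := by
      intro w
      have h1 : Continuous fun s : ℝ => (s, w) := continuous_id.prodMk continuous_const
      exact hFap.1.comp h1
    have hFdcont : ∀ k : ℤ, Continuous (Fd k) := by
      intro k
      exact (hFcw _).sub (hFcw _)
    have hFdb : ∀ (k : ℤ) (s : ℝ), ‖Fd k s‖ ≤ L * ∑ j, U (k - p j) := by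
      intro k s
      exact hFlip s (fun j => y (ts (k - p j))) (fun j => yt (ts (k - p j)))
    have hsumU : ∀ k : ℤ, 0 ≤ ∑ j, U (k - p j) :=
      fun k => Finset.sum_nonneg fun j _ => hU0 _
    have hzcont : ∀ k : ℕ, ∀ dd : ℝ, ContinuousOn z (Set.Icc (ts (k:ℤ)) dd) := by
      intro k dd
      refine (hysol.1.continuousOn).sub (hyt.1.mono ?_)
      intro x hx
      exact le_trans (hmono (by exact_mod_cast Int.ofNat_nonneg k)) hx.1
    have hzder : ∀ k : ℕ, ∀ r' ∈ Set.Ioo (ts (k:ℤ)) (ts ((k:ℤ)+1)),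
        HasDerivAt z (aMul (A r') (z r') + (aMul (B r') (z (ts (k:ℤ))) + Fd (k:ℤ) r')) r' := by
      intro k r' hr'
      have h1 := hysol.2 (k:ℤ) r' hr'
      have h2 := hyt.2 (k:ℤ) (Int.ofNat_nonneg k) r' hr'
      have h3 := h1.sub h2
      have heq : (aMul (A r') (y r') + aMul (B r') (y (ts (k:ℤ)))
            + F r' (fun j => y (ts ((k:ℤ) - p j))))
          - (aMul (A r') (yt r') + aMul (B r') (yt (ts (k:ℤ)))
            + F r' (fun j => yt (ts ((k:ℤ) - p j))))
          = aMul (A r') (z r') + (aMul (B r') (z (ts (k:ℤ))) + Fd (k:ℤ) r') := by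
        simp only [hzdef, hFddef, aMul_sub_vec]
        abel
      rwa [heq] at h3
    have hIntF : ∀ (k : ℕ) (dd : ℝ), ts (k:ℤ) ≤ dd → dd ≤ ts ((k:ℤ)+1) →
        ‖∫ s in ts (k:ℤ)..dd, aMul (X dd * (X s)⁻¹) (Fd (k:ℤ) s)‖
          ≤ L' * ∑ j, U ((k:ℤ) - p j) := by
      intro k dd h1 h2
      set D := L * ∑ j, U ((k:ℤ) - p j) with hDdef
      have hD0 : 0 ≤ D := mul_nonneg hL.le (hsumU _)
      have hgk := hgap (k:ℤ)
      have hbound : ∀ s ∈ Set.uIoc (ts (k:ℤ)) dd,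
          ‖aMul (X dd * (X s)⁻¹) (Fd (k:ℤ) s)‖ ≤ K₀ * D := by
        intro s hs
        rw [Set.uIoc_of_le h1] at hs
        have hXb : ‖X dd * (X s)⁻¹‖ ≤ K₀ := hXXf hs.2 (by linarith [hs.1])
        calc ‖aMul (X dd * (X s)⁻¹) (Fd (k:ℤ) s)‖
            ≤ ‖X dd * (X s)⁻¹‖ * ‖Fd (k:ℤ) s‖ := norm_aMul_le _ _
          _ ≤ K₀ * D := mul_le_mul hXb (hFdb (k:ℤ) s) (norm_nonneg _) hK₀pos.le
      have h3 := intervalIntegral.norm_integral_le_of_norm_le_const hbound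
      have h4 : |dd - ts (k:ℤ)| ≤ θ := by
        rw [abs_of_nonneg (by linarith)]
        linarith
      calc ‖∫ s in ts (k:ℤ)..dd, aMul (X dd * (X s)⁻¹) (Fd (k:ℤ) s)‖
          ≤ K₀ * D * |dd - ts (k:ℤ)| := h3
        _ ≤ K₀ * D * θ := by
            exact mul_le_mul_of_nonneg_left h4 (mul_nonneg hK₀pos.le hD0)
        _ = L' * ∑ j, U ((k:ℤ) - p j) := by
            rw [hL', hDdef]; ring
    set R : ℕ → Vec q := fun k =>
      ∫ s in ts (k:ℤ)..ts ((k:ℤ)+1), aMul (X (ts ((k:ℤ)+1)) * (X s)⁻¹) (Fd (k:ℤ) s) with hRdef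
    have hnode : ∀ k : ℕ, z (ts ((k:ℤ)+1))
        = aMul (Zmat X B ts (k:ℤ) (ts ((k:ℤ)+1))) (z (ts (k:ℤ))) + R k := by
      intro k
      exact zStep hX hXinv hB.1 (hFdcont (k:ℤ)) (hmono (by omega)) (hzcont k _) (hzder k)
    have hrep := discreteRep (fun m : ℕ => Φ (m:ℤ))
      (fun k : ℕ => Zmat X B ts (k:ℤ) (ts ((k:ℤ)+1)))
      (fun n => by
        have hc : ((n+1:ℕ):ℤ) = (n:ℤ)+1 := by push_cast; ring
        show Φ ((n+1:ℕ):ℤ) = Zmat X B ts (n:ℤ) (ts ((n:ℤ)+1)) * Φ (n:ℤ)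
        rw [hc]; exact hΦ (n:ℤ))
      (fun n => hΦinv _)
      (fun m : ℕ => z (ts (m:ℤ))) R
      (fun n => by
        have hc : ((n+1:ℕ):ℤ) = (n:ℤ)+1 := by push_cast; ring
        show z (ts ((n+1:ℕ):ℤ))
          = aMul (Zmat X B ts (n:ℤ) (ts ((n:ℤ)+1))) (z (ts (n:ℤ))) + R n
        rw [hc]; exact hnode n)
    have hRb : ∀ k : ℕ, ‖R k‖ ≤ L' * ∑ j, U ((k:ℤ) - p j) := by
      intro k
      exact hIntF k (ts ((k:ℤ)+1)) (hmono (by omega)) le_rfl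
    have hUb : ∀ n : ℕ, U (n:ℤ) ≤ K * ρ ^ n * M
        + ∑ k ∈ Finset.range n, (K * ρ ^ (n - k)) * (L' * ∑ j, U ((k:ℤ) - p j)) := by
      intro n
      have h1 : z (ts (n:ℤ)) = aMul (Φ (n:ℤ) * (Φ ((0:ℕ):ℤ))⁻¹) (z (ts ((0:ℕ):ℤ)))
          + ∑ k ∈ Finset.range n, aMul (Φ (n:ℤ) * (Φ ((k+1:ℕ):ℤ))⁻¹) (R k) := hrep n
      have hU00 : U 0 ≤ M := hUneg 0 (by omega) le_rfl
      calc U (n:ℤ) = ‖aMul (Φ (n:ℤ) * (Φ ((0:ℕ):ℤ))⁻¹) (z (ts ((0:ℕ):ℤ)))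
            + ∑ k ∈ Finset.range n, aMul (Φ (n:ℤ) * (Φ ((k+1:ℕ):ℤ))⁻¹) (R k)‖ := by
            rw [hUdef]; dsimp only; rw [h1]
        _ ≤ ‖aMul (Φ (n:ℤ) * (Φ ((0:ℕ):ℤ))⁻¹) (z (ts ((0:ℕ):ℤ)))‖
            + ‖∑ k ∈ Finset.range n, aMul (Φ (n:ℤ) * (Φ ((k+1:ℕ):ℤ))⁻¹) (R k)‖ :=
            norm_add_le _ _
        _ ≤ K * ρ ^ n * M
            + ∑ k ∈ Finset.range n, (K * ρ ^ (n - k)) * (L' * ∑ j, U ((k:ℤ) - p j)) := by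
            refine add_le_add ?_ ?_
            · have h2 : ‖aMul (Φ (n:ℤ) * (Φ ((0:ℕ):ℤ))⁻¹) (z (ts ((0:ℕ):ℤ)))‖
                  ≤ ‖Φ (n:ℤ) * (Φ ((0:ℕ):ℤ))⁻¹‖ * ‖z (ts ((0:ℕ):ℤ))‖ := norm_aMul_le _ _
              refine h2.trans ?_
              have h3 : ((0:ℕ):ℤ) = (0:ℤ) := by norm_num
              rw [h3]
              calc ‖Φ (n:ℤ) * (Φ 0)⁻¹‖ * ‖z (ts 0)‖ ≤ (K * ρ ^ n) * M := by
                    exact mul_le_mul (hstab0 n) hU00 (norm_nonneg _)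
                      (mul_nonneg hK0.le (pow_nonneg hρ0.le n))
                _ = K * ρ ^ n * M := by ring
            · refine (norm_sum_le _ _).trans ?_
              refine Finset.sum_le_sum fun k hk => ?_
              have hkn : k < n := Finset.mem_range.mp hk
              calc ‖aMul (Φ (n:ℤ) * (Φ ((k+1:ℕ):ℤ))⁻¹) (R k)‖
                  ≤ ‖Φ (n:ℤ) * (Φ ((k+1:ℕ):ℤ))⁻¹‖ * ‖R k‖ := norm_aMul_le _ _
                _ ≤ (K * ρ ^ (n - k)) * (L' * ∑ j, U ((k:ℤ) - p j)) :=
                    mul_le_mul (hstabk n k hkn) (hRb k) (norm_nonneg _)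
                      (mul_nonneg hK0.le (pow_nonneg hρ0.le _))
    have hdelay : ∀ kk : ℕ, (∀ m : ℕ, m < kk → U (m:ℤ) ≤ K * β ^ m * M) →
        ∀ j : Fin ℓ, U ((kk:ℤ) - p j) ≤ K * β ^ kk * (ρ ^ pm)⁻¹ * M := by
      intro kk ih j
      have hpj1 : 1 ≤ p j := hp j
      have hpjm : p j ≤ pm := hpmub j
      by_cases hc : p j ≤ kk
      · have he : (kk:ℤ) - p j = ((kk - p j : ℕ) : ℤ) := by omega
        rw [he]
        refine (ih _ (by omega)).trans ?_
        have h3 : β ^ (kk - p j) * ρ ^ pm ≤ β ^ kk := by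
          calc β ^ (kk - p j) * ρ ^ pm ≤ β ^ (kk - p j) * β ^ (p j) :=
              mul_le_mul_of_nonneg_left (hauxβ (p j) hpjm) (pow_nonneg hβpos.le _)
            _ = β ^ kk := by rw [← pow_add]; congr 1; omega
        have h2 : β ^ (kk - p j) ≤ β ^ kk * (ρ ^ pm)⁻¹ := by
          rw [← div_eq_mul_inv, le_div_iff₀ hρpm]
          exact h3
        calc K * β ^ (kk - p j) * M ≤ K * (β ^ kk * (ρ ^ pm)⁻¹) * M :=
            mul_le_mul_of_nonneg_right (mul_le_mul_of_nonneg_left h2 hK0.le) hM0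
          _ = K * β ^ kk * (ρ ^ pm)⁻¹ * M := by ring
      · push_neg at hc
        have h1 : U ((kk:ℤ) - p j) ≤ M := hUneg _ (by omega) (by omega)
        refine h1.trans ?_
        have h2 : ρ ^ pm ≤ β ^ kk := hauxβ kk (by omega)
        have h3 : (1:ℝ) ≤ K * β ^ kk * (ρ ^ pm)⁻¹ := by
          have h4 : (1:ℝ) ≤ β ^ kk * (ρ ^ pm)⁻¹ := by
            rw [← div_eq_mul_inv, le_div_iff₀ hρpm, one_mul]
            exact h2
          calc (1:ℝ) ≤ β ^ kk * (ρ ^ pm)⁻¹ := h4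
            _ ≤ K * (β ^ kk * (ρ ^ pm)⁻¹) := le_mul_of_one_le_left (by positivity) hK
            _ = K * β ^ kk * (ρ ^ pm)⁻¹ := by ring
        calc M = 1 * M := (one_mul M).symm
          _ ≤ K * β ^ kk * (ρ ^ pm)⁻¹ * M := mul_le_mul_of_nonneg_right h3 hM0
    have hSdelay : ∀ kk : ℕ, (∀ m : ℕ, m < kk → U (m:ℤ) ≤ K * β ^ m * M) →
        (∑ j, U ((kk:ℤ) - p j)) ≤ ℓ * (K * β ^ kk * (ρ ^ pm)⁻¹ * M) := by
      intro kk ih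
      calc (∑ j, U ((kk:ℤ) - p j)) ≤ ∑ _j : Fin ℓ, K * β ^ kk * (ρ ^ pm)⁻¹ * M :=
          Finset.sum_le_sum fun j _ => hdelay kk ih j
        _ = ℓ * (K * β ^ kk * (ρ ^ pm)⁻¹ * M) := by
          rw [Finset.sum_const, Finset.card_univ, Fintype.card_fin, nsmul_eq_mul]
    have hIndU : ∀ n : ℕ, U (n:ℤ) ≤ K * β ^ n * M := by
      intro n
      induction n using Nat.strong_induction_on with
      | _ n ih =>
        have hUbn := hUb n
        have hsum : ∑ k ∈ Finset.range n, (K * ρ ^ (n - k)) * (L' * ∑ j, U ((k:ℤ) - p j))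
            ≤ ∑ k ∈ Finset.range n, K * M * d' * (ρ ^ (n - 1 - k) * β ^ k) := by
          refine Finset.sum_le_sum fun k hk => ?_
          have hkn : k < n := Finset.mem_range.mp hk
          have h1 : L' * ∑ j, U ((k:ℤ) - p j) ≤ L' * (ℓ * (K * β ^ k * (ρ ^ pm)⁻¹ * M)) :=
            mul_le_mul_of_nonneg_left (hSdelay k (fun m hm => ih m (hm.trans hkn))) hL'pos.le
          have h2 : (K * ρ ^ (n - k)) * (L' * ∑ j, U ((k:ℤ) - p j))
              ≤ (K * ρ ^ (n - k)) * (L' * (ℓ * (K * β ^ k * (ρ ^ pm)⁻¹ * M))) :=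
            mul_le_mul_of_nonneg_left h1 (mul_nonneg hK0.le (pow_nonneg hρ0.le _))
          refine h2.trans (le_of_eq ?_)
          have h3 : ρ ^ (n - k) = ρ * ρ ^ (n - 1 - k) := by
            rw [← pow_succ']
            congr 1
            omega
          rw [h3, hd'def]; ring
        calc U (n:ℤ) ≤ K * ρ ^ n * M
            + ∑ k ∈ Finset.range n, (K * ρ ^ (n - k)) * (L' * ∑ j, U ((k:ℤ) - p j)) := hUbn
          _ ≤ K * ρ ^ n * M + ∑ k ∈ Finset.range n, K * M * d' * (ρ ^ (n - 1 - k) * β ^ k) :=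
            add_le_add_right hsum _
          _ = K * M * (ρ ^ n + d' * ∑ k ∈ Finset.range n, ρ ^ (n - 1 - k) * β ^ k) := by
            rw [← Finset.mul_sum]
            ring
          _ = K * M * β ^ n := by rw [← geom_id hβeq]
          _ = K * β ^ n * M := by ring
    -- interval bound
    intro n r hr
    have h1 : ts (n:ℤ) ≤ r := hr.1
    have h2 : r < ts ((n:ℤ)+1) := hr.2
    have hgn := hgap (n:ℤ)
    have hid := zStep hX hXinv hB.1 (hFdcont (n:ℤ)) h1 (hzcont n r)
      (fun r' hr' => hzder n r' ⟨hr'.1, lt_trans hr'.2 h2⟩)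
    have hZb : ‖Zmat X B ts (n:ℤ) r‖ ≤ C₁ := by
      have hXXr : ‖X r * (X (ts (n:ℤ)))⁻¹‖ ≤ K₀ := hXXf h1 (by linarith)
      have hJb : ‖Jmat X B ts (n:ℤ) r‖ ≤ Real.sqrt q + K₀ * b * θ := by
        rw [Jmat]
        refine (norm_add_le _ _).trans ?_
        rw [frob_norm_one]
        refine add_le_add_right ?_ _
        have hb1 : ∀ u ∈ Set.uIoc (ts (n:ℤ)) r, ‖XX X (ts (n:ℤ)) u * B u‖ ≤ K₀ * b := by
          intro u hu
          rw [Set.uIoc_of_le h1] at hu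
          refine (norm_mul_le _ _).trans ?_
          have hXb : ‖X (ts (n:ℤ)) * (X u)⁻¹‖ ≤ K₀ := hXXb hu.1.le (by linarith [hu.2])
          exact mul_le_mul hXb (hbB u) (norm_nonneg _) hK₀pos.le
        have h3 := intervalIntegral.norm_integral_le_of_norm_le_const hb1
        refine h3.trans ?_
        have h4 : |r - ts (n:ℤ)| ≤ θ := by
          rw [abs_of_nonneg (by linarith)]
          linarith
        exact mul_le_mul_of_nonneg_left h4 (mul_nonneg hK₀pos.le hb0)
      calc ‖Zmat X B ts (n:ℤ) r‖ = ‖XX X r (ts (n:ℤ)) * Jmat X B ts (n:ℤ) r‖ := rfl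
        _ ≤ ‖XX X r (ts (n:ℤ))‖ * ‖Jmat X B ts (n:ℤ) r‖ := norm_mul_le _ _
        _ ≤ K₀ * (Real.sqrt q + K₀ * b * θ) := by
            refine mul_le_mul hXXr hJb (norm_nonneg _) hK₀pos.le
        _ = C₁ := hC₁def.symm
    have hIb := hIntF n r h1 h2.le
    have hSn : (∑ j, U ((n:ℤ) - p j)) ≤ ℓ * (K * β ^ n * (ρ ^ pm)⁻¹ * M) :=
      hSdelay n (fun m _ => hIndU m)
    have hfinal : ‖z r‖ ≤ C₁ * (K * β ^ n * M) + L' * (ℓ * (K * β ^ n * (ρ ^ pm)⁻¹ * M)) := by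
      rw [hid]
      refine (norm_add_le _ _).trans (add_le_add ?_ ?_)
      · calc ‖aMul (Zmat X B ts (n:ℤ) r) (z (ts (n:ℤ)))‖
            ≤ ‖Zmat X B ts (n:ℤ) r‖ * ‖z (ts (n:ℤ))‖ := norm_aMul_le _ _
          _ ≤ C₁ * (K * β ^ n * M) := by
            refine mul_le_mul hZb (hIndU n) (norm_nonneg _) hC₁pos.le
      · refine hIb.trans ?_
        exact mul_le_mul_of_nonneg_left hSn hL'pos.le
    calc ‖y r - yt r‖ = ‖z r‖ := rfl
      _ ≤ C₁ * (K * β ^ n * M) + L' * (ℓ * (K * β ^ n * (ρ ^ pm)⁻¹ * M)) := hfinal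
      _ = Kt * β ^ n * M := by rw [hKtdef]; ring
  constructor
  · exact ⟨Kt, hKtpos, fun yt hyt n r hr => KEY yt hyt n r hr⟩
  · intro hcond
    have h1ρ : 0 < 1 - ρ := by linarith
    have hβ1 : β < 1 := by
      have h2 : K * L' * ℓ < ρ ^ (pm - 1) * (1 - ρ) := by
        have := (div_lt_iff₀ h1ρ).mp hcond
        linarith
      have h4 : ρ ^ (pm - 1) * ρ = ρ ^ pm := by
        rw [← pow_succ]
        congr 1
        omega
      have h3 : d' < 1 - ρ := by
        rw [hd'def]
        calc K * L' * (ℓ:ℝ) * ρ * (ρ ^ pm)⁻¹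
            < (ρ ^ (pm - 1) * (1 - ρ)) * ρ * (ρ ^ pm)⁻¹ :=
              mul_lt_mul_of_pos_right (mul_lt_mul_of_pos_right h2 hρ0) (inv_pos.mpr hρpm)
          _ = (1 - ρ) * (ρ ^ (pm - 1) * ρ) * (ρ ^ pm)⁻¹ := by ring
          _ = 1 - ρ := by rw [h4]; field_simp
      rw [hβeq]; linarith
    set α := β ^ (θ⁻¹) with hαdef
    have hα0 : 0 < α := Real.rpow_pos_of_pos hβpos _
    have hα1 : α < 1 := Real.rpow_lt_one hβpos.le hβ1 (by positivity)
    refine ⟨α, ⟨hα0, hα1⟩, ?_⟩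
    intro ε hε
    have hαts0 : 0 < α ^ (ts 0) := Real.rpow_pos_of_pos hα0 _
    refine ⟨ε * α ^ (ts 0) * β / Kt, by positivity, ?_⟩
    intro yt hyt hMd r hr
    -- locate r in some [t_n, t_{n+1})
    obtain ⟨m₀, hm₀⟩ := Filter.eventually_atTop.mp (htop.eventually_gt_atTop r)
    have hN : r < ts ((m₀.toNat : ℕ) : ℤ) := hm₀ _ (Int.self_le_toNat m₀)
    set N := m₀.toNat with hNdef
    have hP0 : ts ((0:ℕ):ℤ) ≤ r := by
      have : ((0:ℕ):ℤ) = (0:ℤ) := by norm_num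
      rw [this]; exact hr
    set n := Nat.findGreatest (fun k => ts (k:ℤ) ≤ r) N with hndef
    have hn1 : ts (n:ℤ) ≤ r := Nat.findGreatest_spec (P := fun k => ts (k:ℤ) ≤ r) (Nat.zero_le N) hP0
    have hn2 : r < ts ((n:ℤ)+1) := by
      by_cases hc : n + 1 ≤ N
      · have h5 := Nat.findGreatest_is_greatest (P := fun k => ts (k:ℤ) ≤ r)
          (Nat.lt_succ_self n) hc
        have h6 : ¬ ts (((n+1:ℕ)):ℤ) ≤ r := h5
        push_neg at h6
        have h7 : ((n+1:ℕ):ℤ) = (n:ℤ)+1 := by push_cast; ring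
        rwa [h7] at h6
      · push_neg at hc
        have h5 : (N:ℤ) ≤ (n:ℤ)+1 := by
          have : N ≤ n + 1 := hc.le
          exact_mod_cast this
        exact lt_of_lt_of_le hN (hmono h5)
    have hfb := KEY yt hyt n r ⟨hn1, hn2⟩
    -- convert discrete decay to continuous decay
    have hrlin : r ≤ ts 0 + ((n:ℝ)+1) * θ := by
      have h5 := hlinear (n+1)
      have h6 : ((n+1:ℕ):ℤ) = (n:ℤ)+1 := by push_cast; ring
      rw [h6] at h5
      push_cast at h5
      linarith
    have hαθ : α ^ (θ:ℝ) = β := by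
      rw [hαdef, ← Real.rpow_mul hβpos.le, inv_mul_cancel₀ (ne_of_gt hθpos), Real.rpow_one]
    have hrpow : ε * α ^ (ts 0) * β * β ^ n ≤ ε * α ^ r := by
      have h6 : α ^ r ≥ α ^ (ts 0 + ((n:ℝ)+1) * θ) :=
        Real.rpow_le_rpow_of_exponent_ge hα0 hα1.le hrlin
      have h7 : α ^ (ts 0 + ((n:ℝ)+1) * θ) = α ^ (ts 0) * β ^ (n+1) := by
        rw [Real.rpow_add hα0]
        congr 1
        rw [show ((n:ℝ)+1) * θ = θ * ((n+1:ℕ):ℝ) by push_cast; ring]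
        rw [Real.rpow_mul hα0.le, hαθ, Real.rpow_natCast]
      have h8 : α ^ (ts 0) * β ^ (n+1) = α ^ (ts 0) * β * β ^ n := by
        rw [pow_succ]; ring
      have h9 : ε * (α ^ (ts 0) * β * β ^ n) ≤ ε * α ^ r := by
        refine mul_le_mul_of_nonneg_left ?_ hε.le
        rw [← h8, ← h7]; exact h6
      calc ε * α ^ (ts 0) * β * β ^ n = ε * (α ^ (ts 0) * β * β ^ n) := by ring
        _ ≤ ε * α ^ r := h9
    have hKtne : Kt ≠ 0 := ne_of_gt hKtpos
    calc ‖yt r - y r‖ = ‖y r - yt r‖ := norm_sub_rev _ _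
      _ ≤ Kt * β ^ n * ((Finset.range (pm + 1)).sup' (by simp)
          fun j => ‖y (ts (-(j : ℤ))) - yt (ts (-(j : ℤ)))‖) := hfb
      _ ≤ Kt * β ^ n * (ε * α ^ (ts 0) * β / Kt) := by
          refine mul_le_mul_of_nonneg_left hMd ?_
          exact mul_nonneg hKtpos.le (pow_nonneg hβpos.le n)
      _ = ε * α ^ (ts 0) * β * β ^ n := by field_simp
      _ ≤ ε * α ^ r := hrpow
      _ = ε * Real.rpow α r := rfl
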